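/- Let M be a root-closed inside factorial monoid whose set of atoms admits a stratification H = H₁ ∪ ... ∪ H_k such that M_i = ⟨H_i ∪ ... ∪ H_k⟩ is inside factorial with base H_i for each i. Then for all i ∈ {1,...,k−1}, Ap(M, H₁ ∪ ... ∪ H_i) ⊆ D_{M_i}(H_i). -/

import Mathlib

/-- `x ≤_M y` : divisibility in the additive monoid `M`. -/
def MDvd {M : Type*} [AddCancelCommMonoid M] (x y : M) : Prop := ∃ z : M, y = x + z

/-- Divisibility inside a submonoid `N` of `M`. -/
def NDvd {M : Type*} [AddCancelCommMonoid M] (N : AddSubmonoid M) (x y : M) : Prop :=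
  ∃ z ∈ N, y = x + z

/-- An atom: a nonzero element that is not the sum of two nonzero elements. -/
def IsAtomM {M : Type*} [AddCancelCommMonoid M] (a : M) : Prop :=
  a ≠ 0 ∧ ∀ b c : M, a = b + c → b = 0 ∨ c = 0

/-- `M` is atomic: every element is a finite sum of atoms. -/
def AtomicM (M : Type*) [AddCancelCommMonoid M] : Prop :=
  ∀ x : M, ∃ l : Multiset M, (∀ a ∈ l, IsAtomM a) ∧ l.sum = x

/-- `M` is root-closed: `n • a ≤_M n • b` for a positive `n` implies `a ≤_M b`. -/
def RootClosedM (M : Type*) [AddCancelCommMonoid M] : Prop :=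
  ∀ (n : ℕ) (a b : M), 0 < n → MDvd (n • a) (n • b) → MDvd a b

/-- The Apéry set `Ap(M,X) = M \ (X + M)`. -/
def AperyM {M : Type*} [AddCancelCommMonoid M] (X : Set M) : Set M :=
  {x | ∀ q ∈ X, ¬ MDvd q x}

/-- The sum `Σ_{q ∈ Q} λ_q q` encoded by a finitely supported function. -/
def fsum {M : Type*} [AddCancelCommMonoid M] (f : M →₀ ℕ) : M :=
  f.sum fun q n => n • q

/-- `⟨Q⟩` is factorial, freely generated by `Q`. -/
def FreeOn {M : Type*} [AddCancelCommMonoid M] (Q : Set M) : Prop :=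
  ∀ f g : M →₀ ℕ, (f.support : Set M) ⊆ Q → (g.support : Set M) ⊆ Q →
    fsum f = fsum g → f = g

/-- `Q` is linked to the submonoid `N` of `M`. -/
def LinkedIn {M : Type*} [AddCancelCommMonoid M] (N : AddSubmonoid M) (Q : Set M) :
    Prop :=
  ∀ x ∈ N, x ≠ 0 → ∃ c : ℕ, ∀ f : M →₀ ℕ, (f.support : Set M) ⊆ Q →
    NDvd N (fsum f) x → (f.sum fun _ n => n) ≤ c

/-- The submonoid `N` is inside factorial with base `Q ⊆ N`. -/
def InsideFactIn {M : Type*} [AddCancelCommMonoid M] (N : AddSubmonoid M)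
    (Q : Set M) : Prop :=
  Q ⊆ (N : Set M) ∧ FreeOn Q ∧
    ∀ x ∈ N, x ≠ 0 → ∃ m : ℕ, 0 < m ∧ m • x ∈ AddSubmonoid.closure Q

/-- `D_N(Q)`: elements of `N` all of whose coordinates with respect to the base `Q`
are strictly smaller than `1`. -/
def DIn {M : Type*} [AddCancelCommMonoid M] (N : AddSubmonoid M) (Q : Set M) :
    Set M :=
  {x | x ∈ N ∧ ∃ n : ℕ, 0 < n ∧ ∃ f : M →₀ ℕ, (f.support : Set M) ⊆ Q ∧
    n • x = fsum f ∧ ∀ q : M, f q < n}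

lemma fsum_add {M : Type*} [AddCancelCommMonoid M] (f g : M →₀ ℕ) :
    fsum (f + g) = fsum f + fsum g := by
  unfold fsum
  exact Finsupp.sum_add_index' (fun q => zero_nsmul q) (fun q n m => add_nsmul q n m)

lemma fsum_single {M : Type*} [AddCancelCommMonoid M] (q : M) (n : ℕ) :
    fsum (Finsupp.single q n) = n • q := by
  unfold fsum
  exact Finsupp.sum_single_index (zero_nsmul q)

lemma exists_fsum_of_mem_closure {M : Type*} [AddCancelCommMonoid M] {Q : Set M}
    {x : M} (hx : x ∈ AddSubmonoid.closure Q) :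
    ∃ f : M →₀ ℕ, (f.support : Set M) ⊆ Q ∧ fsum f = x := by
  classical
  induction hx using AddSubmonoid.closure_induction with
  | mem q hq =>
      refine ⟨Finsupp.single q 1, ?_, by simp [fsum_single]⟩
      intro p hp
      have : p ∈ (Finsupp.single q 1).support := hp
      rw [Finsupp.support_single_ne_zero q one_ne_zero] at this
      simp at this; subst this; exact hq
  | zero => exact ⟨0, by simp, by simp [fsum]⟩
  | add a b _ _ iha ihb =>
      obtain ⟨f, hf, hfa⟩ := iha
      obtain ⟨g, hg, hgb⟩ := ihb
      refine ⟨f + g, ?_, by rw [fsum_add, hfa, hgb]⟩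
      intro p hp
      have : p ∈ (f + g).support := hp
      have := Finsupp.support_add this
      rcases Finset.mem_union.1 this with h | h
      · exact hf h
      · exact hg h

/-- let `M` be a root-closed inside factorial monoid whose set of atoms
admits a stratification `H = H₁ ∪ ⋯ ∪ H_k` with each `Mᵢ = ⟨Hᵢ ∪ ⋯ ∪ H_k⟩` inside
factorial with base `Hᵢ`. Then `Ap(M, H₁ ∪ ⋯ ∪ Hᵢ) ⊆ D_{Mᵢ}(Hᵢ)` for
`i ∈ {1, …, k−1}`. -/
theorem apery_subset_DIn {M : Type*} [AddCancelCommMonoid M]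
    (hred : ∀ a b : M, a + b = 0 → a = 0)
    (hatomic : AtomicM M) (hrc : RootClosedM M)
    (k : ℕ) (Hs : Fin k → Set M)
    (hdisj : ∀ i j, i ≠ j → Disjoint (Hs i) (Hs j))
    (hunion : (⋃ i, Hs i) = {a : M | IsAtomM a})
    (hfree : ∀ i, FreeOn (Hs i))
    (hlink : ∀ i : Fin k,
      LinkedIn (AddSubmonoid.closure (⋃ j ∈ {j : Fin k | i ≤ j}, Hs j)) (Hs i))
    (hIF : ∀ i : Fin k,
      InsideFactIn (AddSubmonoid.closure (⋃ j ∈ {j : Fin k | i ≤ j}, Hs j)) (Hs i)) :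
    ∀ i : Fin k, (i : ℕ) < k - 1 →
      AperyM (⋃ j ∈ {j : Fin k | j ≤ i}, Hs j) ⊆
        DIn (AddSubmonoid.closure (⋃ j ∈ {j : Fin k | i ≤ j}, Hs j)) (Hs i) := by
  classical
  intro i _ x hx
  set N := AddSubmonoid.closure (⋃ j ∈ {j : Fin k | i ≤ j}, Hs j) with hN
  -- every atom dividing x lies in some Hs j with i ≤ j
  have hxN : x ∈ N := by
    obtain ⟨l, hl, hls⟩ := hatomic x
    rw [← hls]
    refine AddSubmonoid.multiset_sum_mem N l (fun a ha => ?_)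
    have hdvd : MDvd a x := by
      refine ⟨(l.erase a).sum, ?_⟩
      rw [← hls, ← Multiset.sum_cons, Multiset.cons_erase ha]
    have hatom : IsAtomM a := hl a ha
    have : a ∈ ⋃ j, Hs j := by rw [hunion]; exact hatom
    obtain ⟨j, hj⟩ := Set.mem_iUnion.1 this
    have hij : i ≤ j := by
      by_contra hlt
      have : a ∈ ⋃ j ∈ {j : Fin k | j ≤ i}, Hs j :=
        Set.mem_biUnion (le_of_lt (lt_of_not_ge hlt)) hj
      exact hx a this hdvd
    exact AddSubmonoid.subset_closure (Set.mem_biUnion hij hj)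
  refine ⟨hxN, ?_⟩
  by_cases hx0 : x = 0
  · exact ⟨1, one_pos, 0, by simp, by simp [hx0, fsum], by simp⟩
  obtain ⟨m, hm, hmx⟩ := (hIF i).2.2 x hxN hx0
  obtain ⟨f, hfs, hfx⟩ := exists_fsum_of_mem_closure hmx
  refine ⟨m, hm, f, hfs, hfx.symm, fun q => ?_⟩
  by_contra hge
  push_neg at hge
  -- q ∈ Hs i
  have hq : q ∈ Hs i := by
    apply hfs
    have : f q ≠ 0 := by omega
    exact Finsupp.mem_support_iff.2 this
  -- m • q divides m • x
  have hsplit : f = Finsupp.single q m + (f - Finsupp.single q m) := by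
    ext p
    by_cases hp : p = q
    · subst hp
      simp [Finsupp.single_apply]
      omega
    · simp [Finsupp.single_apply, hp, Ne.symm hp]
  have hdvd : MDvd (m • q) (m • x) := by
    refine ⟨fsum (f - Finsupp.single q m), ?_⟩
    rw [← hfx, hsplit]
    rw [fsum_add, fsum_single]
    rw [← hsplit]
  have := hrc m q x hm hdvd
  exact hx q (Set.mem_biUnion (le_refl i) hq) this
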